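/- Every Wheeler NFA with n states over alphabet Σ admits an equivalent Wheeler DFA with at most 2n - 1 - |Σ| states recognizing the same language. The DFA is obtained by the interval construction: its states are the sets I_α = {v : α labels a path s⇝v} for α ∈ Pref(L(A)), with transition (I_α, I_{αe}, e) for each e ∈ Σ with αe ∈ Pref(L(A)), initial state I_ε = {s}, and accepting states those I_α with α ∈ L(A). -/

import Mathlib

variable {V : Type*} {A : Type*}

/-- `Reaches E s α v`: the string `α` labels a path in the labeled graph `E`
from the state `s` to the state `v`. -/
inductive Reaches (E : V → A → V → Prop) (s : V) : List A → V → Prop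
  | nil : Reaches E s [] s
  | snoc {α : List A} {u w : V} {a : A} :
      Reaches E s α u → E u a w → Reaches E s (α ++ [a]) w

/-- Co-lexicographic (strict) order on strings: lexicographic order of reverses. -/
def ColexLt [LinearOrder A] (α β : List A) : Prop :=
  List.Lex (· < ·) α.reverse β.reverse

/-- `r` is a strict total order. -/
def StrictTotal (r : V → V → Prop) : Prop :=
  (∀ x, ¬ r x x) ∧ (∀ x y z, r x y → r y z → r x z) ∧
  (∀ x y : V, x ≠ y → r x y ∨ r y x)

/-- `r` is a Wheeler order for the labeled graph `E`: a strict total order on states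
such that in-degree-0 states precede all states with positive in-degree, edges with
strictly smaller labels point to strictly smaller states, and equally-labeled edges
from ordered sources point to weakly ordered targets. -/
def WheelerRel [LinearOrder A] (E : V → A → V → Prop) (r : V → V → Prop) : Prop :=
  StrictTotal r ∧
  (∀ x w : V, (∀ u a, ¬ E u a x) → (∃ u a, E u a w) → r x w) ∧
  (∀ u₁ a₁ v₁ u₂ a₂ v₂, E u₁ a₁ v₁ → E u₂ a₂ v₂ → a₁ < a₂ → r v₁ v₂) ∧
  (∀ u₁ v₁ u₂ v₂ a, E u₁ a v₁ → E u₂ a v₂ → r u₁ u₂ → r v₁ v₂ ∨ v₁ = v₂)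

/-- The language accepted by the automaton `(V, E, F, s)`. -/
def Lang (E : V → A → V → Prop) (F : Set V) (s : V) : Set (List A) :=
  {α | ∃ w ∈ F, Reaches E s α w}

/-- `Pref(L(A))`: the set of prefixes of accepted strings. -/
def PrefL (E : V → A → V → Prop) (F : Set V) (s : V) : Set (List A) :=
  {α | ∃ β, α ++ β ∈ Lang E F s}

/-- `I_u`: the strings in `Pref(L(A))` labeling a path from `s` to `u`. -/
def Iset (E : V → A → V → Prop) (F : Set V) (s u : V) : Set (List A) :=
  {α | α ∈ PrefL E F s ∧ Reaches E s α u}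

/-- `I_α`: the set of states reached from `s` by a path labeled `α`. -/
def Istr (E : V → A → V → Prop) (s : V) (α : List A) : Set V :=
  {w | Reaches E s α w}

/-- States of the interval determinization: the sets `I_α` for `α ∈ Pref(L(A))`. -/
def DetStates (E : V → A → V → Prop) (F : Set V) (s : V) : Set (Set V) :=
  {S | ∃ α ∈ PrefL E F s, S = Istr E s α}

/-- Edges of the interval determinization: `(I_α, I_{αe}, e)` for `αe ∈ Pref(L(A))`. -/
def DetEdge (E : V → A → V → Prop) (F : Set V) (s : V) :
    Set V → A → Set V → Prop :=
  fun S e T => ∃ α, α ∈ PrefL E F s ∧ (α ++ [e]) ∈ PrefL E F s ∧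
    S = Istr E s α ∧ T = Istr E s (α ++ [e])

lemma reaches_nil {E : V → A → V → Prop} {s w : V} (h : Reaches E s [] w) : w = s := by
  generalize hγ : ([] : List A) = γ at h
  cases h with
  | nil => rfl
  | snoc h1 h2 => simp at hγ

lemma reaches_snoc {E : V → A → V → Prop} {s w : V} {γ : List A} {c : A}
    (h : Reaches E s (γ ++ [c]) w) : ∃ u, Reaches E s γ u ∧ E u c w := by
  generalize hγ : γ ++ [c] = δ at h
  cases h with
  | nil => simp at hγ
  | @snoc α u w' a h1 h2 =>
      obtain ⟨h3, h4⟩ := List.append_inj' hγ rfl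
      subst h3
      obtain rfl : c = a := by simpa using h4
      exact ⟨u, h1, h2⟩

lemma reaches_prefix {E : V → A → V → Prop} {s : V} {α : List A} :
    ∀ {β : List A} {w : V}, Reaches E s (α ++ β) w → ∃ u, Reaches E s α u := by
  intro β
  induction β using List.reverseRecOn with
  | nil => intro w h; rw [List.append_nil] at h; exact ⟨w, h⟩
  | append_singleton β b ih =>
      intro w h
      rw [← List.append_assoc] at h
      obtain ⟨u, hu, -⟩ := reaches_snoc h
      exact ih hu

lemma label_eq {E : V → A → V → Prop} [LinearOrder A] {r : V → V → Prop}
    (hW : WheelerRel E r) {u : V} {a : A} {v u' : V} {b : A}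
    (h1 : E u a v) (h2 : E u' b v) : a = b := by
  rcases lt_trichotomy a b with h | h | h
  · exact absurd (hW.2.2.1 _ _ _ _ _ _ h1 h2 h) (hW.1.1 v)
  · exact h
  · exact absurd (hW.2.2.1 _ _ _ _ _ _ h2 h1 h) (hW.1.1 v)

lemma lemA {E : V → A → V → Prop} [LinearOrder A] {r : V → V → Prop} {s : V}
    (hsrc : ∀ u a, ¬ E u a s) (hW : WheelerRel E r) :
    ∀ {ra rb : List A}, List.Lex (· < ·) ra rb →
      ∀ {u v : V}, Reaches E s ra.reverse u → Reaches E s rb.reverse v →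
        r u v ∨ (Reaches E s rb.reverse u ∧ Reaches E s ra.reverse v) := by
  intro ra rb h
  induction h with
  | @nil b l =>
      intro u v hu hv
      rw [List.reverse_nil] at hu
      obtain rfl : u = s := reaches_nil hu
      rw [List.reverse_cons] at hv
      obtain ⟨v', hv', hE⟩ := reaches_snoc hv
      exact Or.inl (hW.2.1 _ _ hsrc ⟨_, _, hE⟩)
  | @rel a l₁ b l₂ hab =>
      intro u v hu hv
      rw [List.reverse_cons] at hu hv
      obtain ⟨u', -, hEu⟩ := reaches_snoc hu
      obtain ⟨v', -, hEv⟩ := reaches_snoc hv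
      exact Or.inl (hW.2.2.1 _ _ _ _ _ _ hEu hEv hab)
  | @cons a l₁ l₂ h ih =>
      intro u v hu hv
      simp only [List.reverse_cons] at hu hv ⊢
      obtain ⟨u', hu', hEu⟩ := reaches_snoc hu
      obtain ⟨v', hv', hEv⟩ := reaches_snoc hv
      rcases ih hu' hv' with h' | ⟨h1, h2⟩
      · rcases hW.2.2.2 _ _ _ _ _ hEu hEv h' with h'' | h''
        · exact Or.inl h''
        · subst h''
          exact Or.inr ⟨Reaches.snoc hv' hEv, Reaches.snoc hu' hEu⟩
      · exact Or.inr ⟨Reaches.snoc h1 hEu, Reaches.snoc h2 hEv⟩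

def Pord (r : V → V → Prop) (S T : Set V) : Prop :=
  (∀ u ∈ S, u ∉ T → ∀ v ∈ T, r u v) ∧ (∀ u ∈ S, ∀ v ∈ T, v ∉ S → r u v)

lemma mem_Istr {E : V → A → V → Prop} {s : V} {α : List A} {w : V} :
    w ∈ Istr E s α ↔ Reaches E s α w := Iff.rfl

lemma lemP {E : V → A → V → Prop} [LinearOrder A] {r : V → V → Prop} {s : V}
    (hsrc : ∀ u a, ¬ E u a s) (hW : WheelerRel E r) {α β : List A}
    (h : ColexLt α β) : Pord r (Istr E s α) (Istr E s β) := by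
  have key : ∀ {u v : V}, Reaches E s α u → Reaches E s β v →
      r u v ∨ (Reaches E s β u ∧ Reaches E s α v) := by
    intro u v hu hv
    have h2 := lemA hsrc hW (ra := α.reverse) (rb := β.reverse) h (u := u) (v := v)
    simp only [List.reverse_reverse] at h2
    exact h2 hu hv
  constructor
  · intro u hu hnb v hv
    exact (key hu hv).resolve_right (fun hc => hnb hc.1)
  · intro u hu v hv hnv
    exact (key hu hv).resolve_right (fun hc => hnv hc.2)

noncomputable def grk (r : V → V → Prop) (Ws : Set V) (v : V) : ℕ :=
  {u | u ∈ Ws ∧ r u v}.ncard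

lemma grk_lt [Finite V] {r : V → V → Prop} (hst : StrictTotal r) {Ws : Set V} {u v : V}
    (hu : u ∈ Ws) (h : r u v) : grk r Ws u < grk r Ws v := by
  unfold grk
  have hsub : {x | x ∈ Ws ∧ r x u} ⊆ {x | x ∈ Ws ∧ r x v} := by
    rintro x ⟨hx1, hx2⟩
    exact ⟨hx1, hst.2.1 _ _ _ hx2 h⟩
  apply Set.ncard_lt_ncard _ (Set.toFinite _)
  rw [Set.ssubset_iff_of_subset hsub]
  refine ⟨u, ⟨hu, h⟩, ?_⟩
  rintro ⟨-, hc⟩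
  exact hst.1 u hc

lemma grk_lt_ncard [Finite V] {r : V → V → Prop} (hst : StrictTotal r) {Ws : Set V} {v : V}
    (hv : v ∈ Ws) : grk r Ws v < Ws.ncard := by
  unfold grk
  have hsub : {x | x ∈ Ws ∧ r x v} ⊆ Ws := fun x hx => hx.1
  apply Set.ncard_lt_ncard _ (Set.toFinite _)
  rw [Set.ssubset_iff_of_subset hsub]
  refine ⟨v, hv, ?_⟩
  rintro ⟨-, hc⟩
  exact hst.1 v hc

lemma pair_lemma [Finite V] {r : V → V → Prop} (hst : StrictTotal r) (Ws : Set V)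
    {S T : Set V} (hS : S ⊆ Ws) (hT : T ⊆ Ws) (hSne : S.Nonempty) (hTne : T.Nonempty)
    (hP : Pord r S T) :
    sInf (grk r Ws '' S) ≤ sInf (grk r Ws '' T) ∧
    sSup (grk r Ws '' S) ≤ sSup (grk r Ws '' T) ∧
    (S ≠ T →
      sInf (grk r Ws '' S) + sSup (grk r Ws '' S) <
      sInf (grk r Ws '' T) + sSup (grk r Ws '' T)) := by
  obtain ⟨t₀, ht₀, hgt₀⟩ := Nat.sInf_mem (hTne.image (grk r Ws))
  obtain ⟨s₁, hs₁, hgs₁⟩ := Set.Nonempty.csSup_mem (hSne.image (grk r Ws)) (Set.toFinite _)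
  have hbT : BddAbove (grk r Ws '' T) := (Set.toFinite _).bddAbove
  have h1 : sInf (grk r Ws '' S) ≤ sInf (grk r Ws '' T) := by
    by_cases ht₀S : t₀ ∈ S
    · rw [← hgt₀]; exact Nat.sInf_le (Set.mem_image_of_mem _ ht₀S)
    · obtain ⟨s₀, hs₀⟩ := hSne
      have hr : r s₀ t₀ := hP.2 s₀ hs₀ t₀ ht₀ ht₀S
      have := grk_lt hst (hS hs₀) hr
      have h3 : sInf (grk r Ws '' S) ≤ grk r Ws s₀ := Nat.sInf_le ⟨s₀, hs₀, rfl⟩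
      omega
  have h2 : sSup (grk r Ws '' S) ≤ sSup (grk r Ws '' T) := by
    by_cases hs₁T : s₁ ∈ T
    · rw [← hgs₁]; exact le_csSup hbT (Set.mem_image_of_mem _ hs₁T)
    · obtain ⟨t₁, ht₁⟩ := hTne
      have hr : r s₁ t₁ := hP.1 s₁ hs₁ hs₁T t₁ ht₁
      have := grk_lt hst (hS hs₁) hr
      have h3 : grk r Ws t₁ ≤ sSup (grk r Ws '' T) := le_csSup hbT ⟨t₁, ht₁, rfl⟩
      omega
  refine ⟨h1, h2, fun hne => ?_⟩
  have hw : ∃ w, (w ∈ S ∧ w ∉ T) ∨ (w ∈ T ∧ w ∉ S) := by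
    by_contra hc
    push_neg at hc
    exact hne (Set.ext fun x => ⟨fun hx => (hc x).1 hx, fun hx => (hc x).2 hx⟩)
  obtain ⟨w, ⟨hwS, hwT⟩ | ⟨hwT, hwS⟩⟩ := hw
  · have hr : r w t₀ := hP.1 w hwS hwT t₀ ht₀
    have hlt := grk_lt hst (hS hwS) hr
    have h3 : sInf (grk r Ws '' S) ≤ grk r Ws w := Nat.sInf_le ⟨w, hwS, rfl⟩
    omega
  · have hr : r s₁ w := hP.2 s₁ hs₁ w hwT hwS
    have hlt := grk_lt hst (hS hs₁) hr
    have h3 : grk r Ws w ≤ sSup (grk r Ws '' T) := le_csSup hbT ⟨w, hwT, rfl⟩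
    omega

lemma family_bound [Finite V] {r : V → V → Prop} (hst : StrictTotal r) (Ws : Set V)
    (FF : Set (Set V))
    (h1 : ∀ S ∈ FF, S.Nonempty ∧ S ⊆ Ws)
    (h2 : ∀ S ∈ FF, ∀ T ∈ FF, S ≠ T → Pord r S T ∨ Pord r T S) :
    FF.ncard ≤ 2 * Ws.ncard - 1 := by
  rcases FF.eq_empty_or_nonempty with rfl | ⟨S₀, hS₀⟩
  · simp
  have hWne : Ws.Nonempty := by
    obtain ⟨x, hx⟩ := (h1 S₀ hS₀).1
    exact ⟨x, (h1 S₀ hS₀).2 hx⟩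
  have hW1 : 1 ≤ Ws.ncard := (Set.ncard_pos (Set.toFinite _)).mpr hWne
  set φ : Set V → ℕ := fun S => sInf (grk r Ws '' S) + sSup (grk r Ws '' S) with hφ
  have hinj : Set.InjOn φ FF := by
    intro S hS T hT heq
    simp only [hφ] at heq
    by_contra hne
    rcases h2 S hS T hT hne with hP | hP
    · have := (pair_lemma hst Ws (h1 S hS).2 (h1 T hT).2 (h1 S hS).1 (h1 T hT).1 hP).2.2 hne
      omega
    · have := (pair_lemma hst Ws (h1 T hT).2 (h1 S hS).2 (h1 T hT).1 (h1 S hS).1 hP).2.2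
        (Ne.symm hne)
      omega
  have hrange : ∀ S ∈ FF, φ S ≤ 2 * Ws.ncard - 2 := by
    intro S hS
    obtain ⟨x, hxS, hgx⟩ := Nat.sInf_mem ((h1 S hS).1.image (grk r Ws))
    obtain ⟨y, hyS, hgy⟩ := Set.Nonempty.csSup_mem ((h1 S hS).1.image (grk r Ws)) (Set.toFinite _)
    have hx := grk_lt_ncard hst ((h1 S hS).2 hxS)
    have hy := grk_lt_ncard hst ((h1 S hS).2 hyS)
    simp only [hφ]
    omega
  have himg : φ '' FF ⊆ Set.Iic (2 * Ws.ncard - 2) := by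
    rintro x ⟨S, hS, rfl⟩
    exact hrange S hS
  have hcard : (φ '' FF).ncard ≤ 2 * Ws.ncard - 2 + 1 := by
    have := Set.ncard_le_ncard himg (Set.finite_Iic _)
    rwa [← Finset.coe_Iic, Set.ncard_coe_finset, Nat.card_Iic] at this
  rw [← Set.ncard_image_of_injOn hinj]
  omega

lemma lex_total' [LinearOrder A] : ∀ l₁ l₂ : List A,
    l₁ = l₂ ∨ List.Lex (· < ·) l₁ l₂ ∨ List.Lex (· < ·) l₂ l₁ := by
  intro l₁
  induction l₁ with
  | nil =>
      intro l₂
      cases l₂ with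
      | nil => exact Or.inl rfl
      | cons b t => exact Or.inr (Or.inl List.Lex.nil)
  | cons a t ih =>
      intro l₂
      cases l₂ with
      | nil => exact Or.inr (Or.inr List.Lex.nil)
      | cons b t₂ =>
          rcases lt_trichotomy a b with h | rfl | h
          · exact Or.inr (Or.inl (List.Lex.rel h))
          · rcases ih t₂ with rfl | h | h
            · exact Or.inl rfl
            · exact Or.inr (Or.inl (List.Lex.cons h))
            · exact Or.inr (Or.inr (List.Lex.cons h))
          · exact Or.inr (Or.inr (List.Lex.rel h))

lemma colex_total [LinearOrder A] {α β : List A} (h : α ≠ β) :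
    ColexLt α β ∨ ColexLt β α := by
  rcases lex_total' α.reverse β.reverse with he | h' | h'
  · exact absurd (List.reverse_injective he) h
  · exact Or.inl h'
  · exact Or.inr h'

lemma colex_snoc [LinearOrder A] {α β : List A} (e : A) (h : ColexLt α β) :
    ColexLt (α ++ [e]) (β ++ [e]) := by
  unfold ColexLt at h ⊢
  simp only [List.reverse_append, List.reverse_cons, List.reverse_nil, List.nil_append,
    List.singleton_append]
  exact List.Lex.cons h

lemma Istr_nil (E : V → A → V → Prop) (s : V) : Istr E s [] = {s} := by
  ext w
  constructor
  · intro h; exact reaches_nil h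
  · rintro rfl; exact Reaches.nil

lemma Istr_snoc_mem {E : V → A → V → Prop} {s : V} {α : List A} {e : A} {w : V} :
    w ∈ Istr E s (α ++ [e]) ↔ ∃ u ∈ Istr E s α, E u e w := by
  constructor
  · intro h
    obtain ⟨u, h1, h2⟩ := reaches_snoc h
    exact ⟨u, h1, h2⟩
  · rintro ⟨u, h1, h2⟩
    exact Reaches.snoc h1 h2

lemma Istr_snoc_congr {E : V → A → V → Prop} {s : V} {α β : List A} (e : A)
    (h : Istr E s α = Istr E s β) : Istr E s (α ++ [e]) = Istr E s (β ++ [e]) := by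
  ext w
  rw [Istr_snoc_mem, Istr_snoc_mem, h]

lemma prefL_drop {E : V → A → V → Prop} {F : Set V} {s : V} {α : List A} {e : A}
    (h : (α ++ [e]) ∈ PrefL E F s) : α ∈ PrefL E F s := by
  obtain ⟨β, hβ⟩ := h
  exact ⟨[e] ++ β, by rwa [← List.append_assoc]⟩

lemma Istr_nonempty {E : V → A → V → Prop} {F : Set V} {s : V} {α : List A}
    (h : α ∈ PrefL E F s) : (Istr E s α).Nonempty := by
  obtain ⟨β, w, hwF, hr⟩ := h
  exact reaches_prefix hr

def TgtSet (E : V → A → V → Prop) (F : Set V) (s : V) : Set (Set V) :=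
  {T | ∃ (α : List A) (e : A), (α ++ [e]) ∈ PrefL E F s ∧ T = Istr E s (α ++ [e])}

noncomputable def arnk [Fintype A] [LinearOrder A] (a : A) : ℕ := {b | b < a}.ncard

lemma arnk_mono [Fintype A] [LinearOrder A] {a b : A} (h : a < b) : arnk a < arnk b := by
  unfold arnk
  have hsub : {x | x < a} ⊆ {x | x < b} := fun x hx => lt_trans hx h
  apply Set.ncard_lt_ncard _ (Set.toFinite _)
  rw [Set.ssubset_iff_of_subset hsub]
  exact ⟨a, h, lt_irrefl a⟩

open Classical in
noncomputable def kap [Fintype A] [LinearOrder A] (E : V → A → V → Prop) (S : Set V) : ℕ :=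
  if h : ∃ e : A, S.Nonempty ∧ ∀ v ∈ S, ∃ u, E u e v then arnk h.choose else 0

lemma kap_eq [Fintype A] [LinearOrder A] {E : V → A → V → Prop} {r : V → V → Prop}
    (hW : WheelerRel E r) {S : Set V} {e : A} (hne : S.Nonempty)
    (hsub : ∀ v ∈ S, ∃ u, E u e v) : kap E S = arnk e := by
  have h : ∃ e : A, S.Nonempty ∧ ∀ v ∈ S, ∃ u, E u e v := ⟨e, hne, hsub⟩
  unfold kap
  rw [dif_pos h]
  obtain ⟨v, hv⟩ := hne
  obtain ⟨u1, hu1⟩ := h.choose_spec.2 v hv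
  obtain ⟨u2, hu2⟩ := hsub v hv
  rw [label_eq hW hu1 hu2]

noncomputable def encSet [Fintype V] (S : Set V) : ℕ :=
  (Fintype.equivFin (Set V) S).val

lemma encSet_inj [Fintype V] {S T : Set V} (h : encSet S = encSet T) : S = T := by
  unfold encSet at h
  exact (Fintype.equivFin (Set V)).injective (Fin.val_injective h)

def lex5 (p q : ℕ × ℕ × ℕ × ℕ × ℕ) : Prop :=
  p.1 < q.1 ∨ (p.1 = q.1 ∧ (p.2.1 < q.2.1 ∨ (p.2.1 = q.2.1 ∧ (p.2.2.1 < q.2.2.1 ∨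
    (p.2.2.1 = q.2.2.1 ∧ (p.2.2.2.1 < q.2.2.2.1 ∨
      (p.2.2.2.1 = q.2.2.2.1 ∧ p.2.2.2.2 < q.2.2.2.2)))))))

lemma lex5_irrefl (p : ℕ × ℕ × ℕ × ℕ × ℕ) : ¬ lex5 p p := by
  unfold lex5; omega

lemma lex5_trans {p q w : ℕ × ℕ × ℕ × ℕ × ℕ} (h1 : lex5 p q) (h2 : lex5 q w) :
    lex5 p w := by
  unfold lex5 at *; omega

lemma lex5_cases (p q : ℕ × ℕ × ℕ × ℕ × ℕ) : lex5 p q ∨ lex5 q p ∨ p = q := by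
  obtain ⟨a1, a2, a3, a4, a5⟩ := p
  obtain ⟨b1, b2, b3, b4, b5⟩ := q
  simp only [lex5, Prod.mk.injEq]
  omega

open Classical in
noncomputable def psi [Fintype V] [Fintype A] [LinearOrder A]
    (E : V → A → V → Prop) (F : Set V) (s : V) (r : V → V → Prop) (S : Set V) :
    ℕ × ℕ × ℕ × ℕ × ℕ :=
  ((if S ∈ TgtSet E F s then 1 else 0), kap E S,
    sInf (grk r Set.univ '' S), sSup (grk r Set.univ '' S), encSet S)

lemma ncard_biUnion_le {γ β : Type*} [Finite γ] (t : Finset β) (f : β → Set γ) :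
    (⋃ b ∈ t, f b).ncard ≤ ∑ b ∈ t, (f b).ncard := by
  classical
  induction t using Finset.induction_on with
  | empty => simp
  | @insert a t' ha ih =>
      rw [Finset.set_biUnion_insert, Finset.sum_insert ha]
      exact le_trans (Set.ncard_union_le _ _) (Nat.add_le_add_left ih _)

lemma ncard_biUnion_disj {γ β : Type*} [Finite γ] (t : Finset β) (f : β → Set γ)
    (hd : ∀ a ∈ t, ∀ b ∈ t, a ≠ b → Disjoint (f a) (f b)) :
    (⋃ b ∈ t, f b).ncard = ∑ b ∈ t, (f b).ncard := by
  classical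
  induction t using Finset.induction_on with
  | empty => simp
  | @insert a t' ha ih =>
      rw [Finset.set_biUnion_insert, Finset.sum_insert ha]
      rw [Set.ncard_union_eq _ (Set.toFinite _) (Set.toFinite _)]
      · rw [ih (fun x hx y hy hxy =>
          hd x (Finset.mem_insert_of_mem hx) y (Finset.mem_insert_of_mem hy) hxy)]
      · rw [Set.disjoint_left]
        intro x hxa hxU
        rw [Set.mem_iUnion₂] at hxU
        obtain ⟨b, hb, hxb⟩ := hxU
        have hab : a ≠ b := fun he => ha (he ▸ hb)
        exact (Set.disjoint_left.mp (hd a (Finset.mem_insert_self a t') b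
          (Finset.mem_insert_of_mem hb) hab)) hxa hxb

lemma detEdge_iff {E : V → A → V → Prop} {F : Set V} {s : V} {S : Set V} {e : A} {T : Set V} :
    DetEdge E F s S e T ↔ ∃ α, α ∈ PrefL E F s ∧ (α ++ [e]) ∈ PrefL E F s ∧
      S = Istr E s α ∧ T = Istr E s (α ++ [e]) := Iff.rfl

lemma tgt_mem {E : V → A → V → Prop} {F : Set V} {s : V} {α : List A} {e : A}
    (h : (α ++ [e]) ∈ PrefL E F s) : Istr E s (α ++ [e]) ∈ TgtSet E F s := ⟨α, e, h, rfl⟩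

lemma tgt_not_nil {E : V → A → V → Prop} {F : Set V} {s : V}
    (hsrc : ∀ u a, ¬ E u a s) : Istr E s [] ∉ TgtSet E F s := by
  rintro ⟨α, e, hp, heq⟩
  have hs : s ∈ Istr E s [] := Reaches.nil
  rw [heq] at hs
  obtain ⟨u, -, hE⟩ := reaches_snoc hs
  exact hsrc u e hE

lemma lemB [Fintype V] [Fintype A] [LinearOrder A] {E : V → A → V → Prop} {F : Set V}
    {s : V} {r : V → V → Prop} (hsrc : ∀ u a, ¬ E u a s) (hW : WheelerRel E r)
    {γ δ : List A} (hγ : γ ∈ PrefL E F s) (hδ : δ ∈ PrefL E F s)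
    (hcl : ColexLt γ δ) (hne : Istr E s γ ≠ Istr E s δ) :
    lex5 (psi E F s r (Istr E s γ)) (psi E F s r (Istr E s δ)) := by
  rcases List.eq_nil_or_concat δ with rfl | ⟨δ', d, rfl⟩
  · exfalso
    unfold ColexLt at hcl
    rw [List.reverse_nil] at hcl
    exact List.not_lex_nil hcl
  rw [List.concat_eq_append] at hδ hne hcl ⊢
  have hTδ : Istr E s (δ' ++ [d]) ∈ TgtSet E F s := tgt_mem hδ
  have hneδ : (Istr E s (δ' ++ [d])).Nonempty := Istr_nonempty hδ
  have hsubδ : ∀ v ∈ Istr E s (δ' ++ [d]), ∃ u, E u d v := by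
    intro v hv
    obtain ⟨u, -, hE⟩ := reaches_snoc hv
    exact ⟨u, hE⟩
  rcases List.eq_nil_or_concat γ with rfl | ⟨γ', c, rfl⟩
  · unfold lex5
    left
    simp only [psi]
    rw [if_neg (tgt_not_nil hsrc), if_pos hTδ]
    omega
  rw [List.concat_eq_append] at hγ hne hcl ⊢
  have hTγ : Istr E s (γ' ++ [c]) ∈ TgtSet E F s := tgt_mem hγ
  have hneγ : (Istr E s (γ' ++ [c])).Nonempty := Istr_nonempty hγ
  have hsubγ : ∀ v ∈ Istr E s (γ' ++ [c]), ∃ u, E u c v := by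
    intro v hv
    obtain ⟨u, -, hE⟩ := reaches_snoc hv
    exact ⟨u, hE⟩
  have hk1 : kap E (Istr E s (γ' ++ [c])) = arnk c := kap_eq hW hneγ hsubγ
  have hk2 : kap E (Istr E s (δ' ++ [d])) = arnk d := kap_eq hW hneδ hsubδ
  have hclx : List.Lex (· < ·) (c :: γ'.reverse) (d :: δ'.reverse) := by
    unfold ColexLt at hcl
    simpa [List.reverse_append] using hcl
  cases hclx with
  | rel hcd =>
      unfold lex5
      simp only [psi]
      rw [if_pos hTγ, if_pos hTδ, hk1, hk2]
      have := arnk_mono hcd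
      omega
  | cons h' =>
      have hP := lemP (s := s) hsrc hW hcl
      have hpair := pair_lemma hW.1 Set.univ (Set.subset_univ _) (Set.subset_univ _)
        hneγ hneδ hP
      have h3 := hpair.2.2 hne
      have h4 := hpair.1
      have h5 := hpair.2.1
      unfold lex5
      simp only [psi]
      rw [if_pos hTγ, if_pos hTδ, hk1, hk2]
      omega

def WaSet (E : V → A → V → Prop) (a : A) : Set V := {v | ∃ u, E u a v}

def FamSet (E : V → A → V → Prop) (F : Set V) (s : V) (a : A) : Set (Set V) :=
  {S | ∃ α : List A, (α ++ [a]) ∈ PrefL E F s ∧ S = Istr E s (α ++ [a])}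

/-- Determinization of a Wheeler NFA: a Wheeler NFA with `n` states over alphabet `Σ`
(in which every letter occurs) admits, via the interval construction, an equivalent
Wheeler DFA with at most `2n - 1 - |Σ|` states. -/
theorem stmt9 {V A : Type*} [Fintype V] [Fintype A] [LinearOrder A]
    (E : V → A → V → Prop) (F : Set V) (s : V) (r : V → V → Prop)
    (hsrc : ∀ u a, ¬ E u a s)
    (hsuniq : ∀ x : V, (∀ u a, ¬ E u a x) → x = s)
    (hreach : ∀ x : V, ∃ α, Reaches E s α x)
    (hW : WheelerRel E r)
    (hocc : ∀ a : A, ∃ u w, E u a w) :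
    -- size bound: at most 2n - 1 - |Σ| states
    ((DetStates E F s).Finite ∧
      (DetStates E F s).ncard ≤ 2 * Fintype.card V - 1 - Fintype.card A) ∧
    -- the construction is deterministic
    (∀ S e T T', DetEdge E F s S e T → DetEdge E F s S e T' → T = T') ∧
    -- it recognizes the same language: a string is accepted by the determinization
    -- (it labels a path from I_ε ending in an accepting state I_β, β ∈ L(A))
    -- iff it belongs to L(A)
    (∀ α : List A,
      (α ∈ PrefL E F s ∧ ∃ β ∈ Lang E F s, Istr E s α = Istr E s β) ↔
        α ∈ Lang E F s) ∧
    -- and it is Wheeler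
    (∃ r' : Set V → Set V → Prop, WheelerRel (DetEdge E F s) r') := by
  classical
  have hdet : ∀ S e T T', DetEdge E F s S e T → DetEdge E F s S e T' → T = T' := by
    rintro S e T T' ⟨α, hα, hαe, rfl, rfl⟩ ⟨β, hβ, hβe, hSβ, rfl⟩
    exact Istr_snoc_congr e hSβ
  have hlang : ∀ α : List A,
      (α ∈ PrefL E F s ∧ ∃ β ∈ Lang E F s, Istr E s α = Istr E s β) ↔
        α ∈ Lang E F s := by
    intro α
    constructor
    · rintro ⟨hα, β, hβ, heq⟩
      obtain ⟨w, hwF, hr⟩ := hβ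
      have hw : w ∈ Istr E s α := heq ▸ (hr : w ∈ Istr E s β)
      exact ⟨w, hwF, hw⟩
    · intro hα
      exact ⟨⟨[], by simpa using hα⟩, α, hα, rfl⟩
  have hcount : (DetStates E F s).ncard ≤ 2 * Fintype.card V - 1 - Fintype.card A := by
    have hsubset : DetStates E F s ⊆
        insert (Istr E s []) (⋃ a ∈ (Finset.univ : Finset A), FamSet E F s a) := by
      rintro S ⟨α, hα, rfl⟩
      rcases List.eq_nil_or_concat α with rfl | ⟨γ, a, rfl⟩
      · exact Set.mem_insert _ _
      · refine Set.mem_insert_of_mem _ ?_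
        rw [Set.mem_iUnion₂]
        rw [List.concat_eq_append] at hα ⊢
        exact ⟨a, Finset.mem_univ a, γ, hα, rfl⟩
    have hclass : ∀ a : A, (FamSet E F s a).ncard ≤ 2 * (WaSet E a).ncard - 1 := by
      intro a
      apply family_bound hW.1 (WaSet E a)
      · rintro S ⟨α, hα, rfl⟩
        refine ⟨Istr_nonempty hα, ?_⟩
        intro v hv
        obtain ⟨u, -, hE⟩ := reaches_snoc hv
        exact ⟨u, hE⟩
      · rintro S ⟨α, hα, rfl⟩ T ⟨β, hβ, rfl⟩ hne
        have hab : α ++ [a] ≠ β ++ [a] := fun he => hne (by rw [he])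
        rcases colex_total hab with h | h
        · exact Or.inl (lemP hsrc hW h)
        · exact Or.inr (lemP hsrc hW h)
    have hWdisj : ∀ a ∈ (Finset.univ : Finset A), ∀ b ∈ (Finset.univ : Finset A),
        a ≠ b → Disjoint (WaSet E a) (WaSet E b) := by
      intro a _ b _ hab
      rw [Set.disjoint_left]
      rintro v ⟨u1, h1⟩ ⟨u2, h2⟩
      exact hab (label_eq hW h1 h2)
    have hsumW : ∑ a : A, (WaSet E a).ncard ≤ Fintype.card V - 1 := by
      rw [← ncard_biUnion_disj _ _ hWdisj]
      have hsub2 : (⋃ a ∈ (Finset.univ : Finset A), WaSet E a) ⊆ ({s}ᶜ : Set V) := by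
        intro v hv
        rw [Set.mem_iUnion₂] at hv
        obtain ⟨a, -, u, hE⟩ := hv
        intro hvs
        rw [Set.mem_singleton_iff] at hvs
        exact hsrc u a (hvs ▸ hE)
      have h5 := Set.ncard_le_ncard hsub2 (Set.toFinite _)
      have h6 : ({s} : Set V).ncard + (({s} : Set V)ᶜ).ncard = Nat.card V :=
        Set.ncard_add_ncard_compl _
      rw [Set.ncard_singleton, Nat.card_eq_fintype_card] at h6
      omega
    have hone : ∀ a : A, 1 ≤ (WaSet E a).ncard := by
      intro a
      obtain ⟨u, w, hE⟩ := hocc a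
      exact (Set.ncard_pos (Set.toFinite _)).mpr ⟨w, u, hE⟩
    have hA : Fintype.card A ≤ ∑ a : A, (WaSet E a).ncard := by
      calc Fintype.card A = ∑ _a : A, 1 := by simp
      _ ≤ _ := Finset.sum_le_sum (fun a _ => hone a)
    have hsum2 : ∑ a : A, (FamSet E F s a).ncard + Fintype.card A
        ≤ 2 * ∑ a : A, (WaSet E a).ncard := by
      calc ∑ a : A, (FamSet E F s a).ncard + Fintype.card A
          = ∑ a : A, ((FamSet E F s a).ncard + 1) := by
            rw [Finset.sum_add_distrib]; simp
      _ ≤ ∑ a : A, 2 * (WaSet E a).ncard :=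
            Finset.sum_le_sum (fun a _ => by have h1 := hclass a; have h2 := hone a; omega)
      _ = 2 * ∑ a : A, (WaSet E a).ncard := by rw [Finset.mul_sum]
    have hins := Set.ncard_insert_le (Istr E s [])
      (⋃ a ∈ (Finset.univ : Finset A), FamSet E F s a)
    have hle := Set.ncard_le_ncard hsubset (Set.toFinite _)
    have hbu := ncard_biUnion_le (Finset.univ : Finset A) (FamSet E F s)
    have hn1 : 1 ≤ Fintype.card V := Fintype.card_pos_iff.mpr ⟨s⟩
    omega
  refine ⟨⟨Set.toFinite _, hcount⟩, hdet, hlang, ?_⟩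
  refine ⟨fun S T => lex5 (psi E F s r S) (psi E F s r T), ?_, ?_, ?_, ?_⟩
  · refine ⟨fun x => lex5_irrefl _, fun x y z h1 h2 => lex5_trans h1 h2, fun x y hxy => ?_⟩
    rcases lex5_cases (psi E F s r x) (psi E F s r y) with h | h | h
    · exact Or.inl h
    · exact Or.inr h
    · exfalso
      apply hxy
      have h2 := congrArg (fun p : ℕ × ℕ × ℕ × ℕ × ℕ => p.2.2.2.2) h
      simp only [psi] at h2
      exact encSet_inj h2
  · intro X W hXno hWin
    obtain ⟨U, a, α, hα, hαe, hU, hW2⟩ := hWin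
    have hWT : W ∈ TgtSet E F s := hW2 ▸ tgt_mem hαe
    have hXT : X ∉ TgtSet E F s := by
      rintro ⟨β, e, hβe, rfl⟩
      exact hXno (Istr E s β) e ⟨β, prefL_drop hβe, hβe, rfl, rfl⟩
    unfold lex5
    left
    simp only [psi]
    rw [if_neg hXT, if_pos hWT]
    omega
  · intro U₁ a₁ T₁ U₂ a₂ T₂ h₁ h₂ hlt
    obtain ⟨α, hα, hαe, -, rfl⟩ := h₁
    obtain ⟨β, hβ, hβe, -, rfl⟩ := h₂
    have hT₁ : Istr E s (α ++ [a₁]) ∈ TgtSet E F s := tgt_mem hαe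
    have hT₂ : Istr E s (β ++ [a₂]) ∈ TgtSet E F s := tgt_mem hβe
    have hk1 : kap E (Istr E s (α ++ [a₁])) = arnk a₁ :=
      kap_eq hW (Istr_nonempty hαe) (fun v hv => by
        obtain ⟨u, -, hE⟩ := reaches_snoc hv; exact ⟨u, hE⟩)
    have hk2 : kap E (Istr E s (β ++ [a₂])) = arnk a₂ :=
      kap_eq hW (Istr_nonempty hβe) (fun v hv => by
        obtain ⟨u, -, hE⟩ := reaches_snoc hv; exact ⟨u, hE⟩)
    unfold lex5
    simp only [psi]
    rw [if_pos hT₁, if_pos hT₂, hk1, hk2]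
    have := arnk_mono hlt
    omega
  · intro S₁ T₁ S₂ T₂ e h₁ h₂ hr'
    obtain ⟨α, hα, hαe, rfl, rfl⟩ := h₁
    obtain ⟨β, hβ, hβe, hS, rfl⟩ := h₂
    by_cases heq : Istr E s α = Istr E s β
    · exact Or.inr (Istr_snoc_congr e heq)
    by_cases heq2 : Istr E s (α ++ [e]) = Istr E s (β ++ [e])
    · exact Or.inr heq2
    have hab : α ≠ β := fun h => heq (by rw [h])
    rcases colex_total hab with hcl | hcl
    · exact Or.inl (lemB hsrc hW hαe hβe (colex_snoc e hcl) heq2)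
    · exfalso
      rw [hS] at hr'
      have hBA := lemB hsrc hW hβ hα hcl (fun h => heq h.symm)
      exact lex5_irrefl _ (lex5_trans hr' hBA)
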